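/- Let G be a simple graph, v a vertex, and suppose the number of non-edges in the induced subgraph on N(v) exceeds ϑD². Let τ assign to each vertex an independent uniform color from Γ = [D], where D ≥ deg(u) for all u. For nonadjacent w, z ∈ N(v), let A^v_{wz} be the event that τ_w = τ_z and τ_x ≠ τ_w for all x ∈ (N(v) ∪ N(w) ∪ N(z)) \ {w, z}. Then P(A^v_{wz}) = D^{-1}(1 - 1/D)^{|J|} where J = (N(v) ∪ N(w) ∪ N(z)) \ {w, z}, and consequently the expected number of pairs {w,z} ⊆ N(v) for which A^v_{wz} holds is greater than ϑ D e^{-3}, provided |J| ≤ 3D - 3. -/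

import Mathlib

open scoped Classical


theorem exp_bound' (D : ℕ) (hD : 0 < D) (m : ℕ) (hm : m ≤ 3 * D - 3) :
    Real.exp (-3) ≤ (1 - 1 / (D : ℝ)) ^ m := by
  rcases Nat.lt_or_ge D 2 with h2 | h2
  · have hD1 : D = 1 := by omega
    subst hD1
    have : m = 0 := by omega
    subst this
    simpa using Real.exp_le_one_iff.mpr (by norm_num)
  · have hDr : (2:ℝ) ≤ (D:ℝ) := by exact_mod_cast h2
    have hpos : (0:ℝ) < (D:ℝ) - 1 := by linarith
    have hD0 : (0:ℝ) < (D:ℝ) := by linarith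
    have h1 : (0:ℝ) < 1 - 1/(D:ℝ) := by
      rw [sub_pos, div_lt_one hD0]; linarith
    have key : Real.exp (-(1/((D:ℝ)-1))) ≤ 1 - 1/(D:ℝ) := by
      have h := Real.add_one_le_exp (1/((D:ℝ)-1))
      rw [Real.exp_neg, ← one_div, div_le_iff₀ (Real.exp_pos _)]
      have heq : (1 - 1/(D:ℝ)) * (1/((D:ℝ)-1) + 1) = 1 := by field_simp; ring
      calc (1:ℝ) = (1 - 1/(D:ℝ)) * (1/((D:ℝ)-1) + 1) := heq.symm
        _ ≤ (1 - 1/(D:ℝ)) * Real.exp (1/((D:ℝ)-1)) :=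
            mul_le_mul_of_nonneg_left h h1.le
    have hmr : (m:ℝ) ≤ 3 * ((D:ℝ) - 1) := by
      have : (m:ℝ) + 3 ≤ 3 * (D:ℝ) := by exact_mod_cast (by omega : m + 3 ≤ 3 * D)
      linarith
    calc Real.exp (-3) ≤ Real.exp (-((m:ℝ)/((D:ℝ)-1))) := by
          apply Real.exp_le_exp.mpr
          rw [neg_le_neg_iff, div_le_iff₀ hpos]; linarith
      _ = (Real.exp (-(1/((D:ℝ)-1)))) ^ m := by
          rw [← Real.exp_nat_mul]; congr 1; field_simp
      _ ≤ (1 - 1/(D:ℝ)) ^ m := pow_le_pow_left₀ (Real.exp_nonneg _) key m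



theorem count_prob' {V : Type*} [Fintype V] [DecidableEq V] (D : ℕ) (hD : 0 < D)
    (w z : V) (hwz : w ≠ z) (Jwz : Finset V) (hw : w ∉ Jwz) (hz : z ∉ Jwz) :
    ((Finset.univ.filter (fun τ : V → Fin D =>
        τ w = τ z ∧ ∀ x ∈ Jwz, τ x ≠ τ w)).card : ℝ) / (Fintype.card (V → Fin D)) =
      (D : ℝ)⁻¹ * (1 - 1 / (D : ℝ)) ^ Jwz.card := by
  haveI : NeZero D := ⟨hD.ne'⟩
  set T : Fin D → V → Finset (Fin D) := fun c x =>
    if x = w ∨ x = z then {c} else if x ∈ Jwz then {c}ᶜ else Finset.univ with hT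
  -- the filtered set is a disjoint union of piFinsets
  have hset : Finset.univ.filter (fun τ : V → Fin D =>
      τ w = τ z ∧ ∀ x ∈ Jwz, τ x ≠ τ w) =
      (Finset.univ : Finset (Fin D)).biUnion (fun c => Fintype.piFinset (T c)) := by
    ext τ
    simp only [Finset.mem_filter, Finset.mem_univ, true_and, Finset.mem_biUnion,
      Fintype.mem_piFinset, hT]
    constructor
    · rintro ⟨h1, h2⟩
      refine ⟨τ w, fun x => ?_⟩
      by_cases hx : x = w ∨ x = z
      · rcases hx with rfl | rfl <;> simp [h1.symm]
      · simp only [hx, if_false]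
        by_cases hxJ : x ∈ Jwz
        · simp [hxJ, h2 x hxJ]
        · simp [hxJ]
    · rintro ⟨c, hc⟩
      have hcw := hc w
      have hcz := hc z
      simp only [true_or, or_true, if_true, Finset.mem_singleton] at hcw hcz
      refine ⟨hcw.trans hcz.symm, fun x hxJ => ?_⟩
      have hxw : ¬(x = w ∨ x = z) := by
        rintro (rfl | rfl) <;> [exact hw hxJ; exact hz hxJ]
      have := hc x
      simp only [hxw, if_false, hxJ, if_true, Finset.mem_compl,
        Finset.mem_singleton] at this
      rw [hcw]; exact this
  have hdisj : ((Finset.univ : Finset (Fin D)) : Set (Fin D)).PairwiseDisjoint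
      (fun c => Fintype.piFinset (T c)) := by
    intro c _ d _ hcd
    rw [Function.onFun, Finset.disjoint_left]
    intro τ h1 h2
    rw [Fintype.mem_piFinset] at h1 h2
    have e1 := h1 w
    have e2 := h2 w
    simp only [hT, true_or, if_true, Finset.mem_singleton] at e1 e2
    exact hcd (e1 ▸ e2 ▸ rfl)
  have hcard : (Finset.univ.filter (fun τ : V → Fin D =>
      τ w = τ z ∧ ∀ x ∈ Jwz, τ x ≠ τ w)).card =
      ∑ c : Fin D, ∏ x : V, (T c x).card := by
    rw [hset, Finset.card_biUnion hdisj]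
    exact Finset.sum_congr rfl fun c _ => Fintype.card_piFinset _
  rw [hcard]
  -- now real arithmetic
  have hDne : ((D : ℝ)) ≠ 0 := Nat.cast_ne_zero.mpr hD.ne'
  have hprod : ∀ c : Fin D, (∏ x : V, ((T c x).card : ℝ) / (D : ℝ)) =
      ((D : ℝ)⁻¹)^2 * (1 - 1/(D:ℝ)) ^ Jwz.card := by
    intro c
    have hsub : insert w (insert z Jwz) ⊆ Finset.univ := Finset.subset_univ _
    rw [← Finset.prod_subset hsub (fun x _ hx => ?_)]
    · have hwmem : w ∉ insert z Jwz := by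
        simp only [Finset.mem_insert]; rintro (rfl | h) <;> [exact hwz rfl; exact hw h]
      rw [Finset.prod_insert hwmem, Finset.prod_insert hz]
      have gw : ((T c w).card : ℝ) / (D:ℝ) = (D:ℝ)⁻¹ := by
        simp [hT]
      have gz : ((T c z).card : ℝ) / (D:ℝ) = (D:ℝ)⁻¹ := by
        simp [hT]
      have gJ : ∀ x ∈ Jwz, ((T c x).card : ℝ) / (D:ℝ) = 1 - 1/(D:ℝ) := by
        intro x hx
        have hxw : ¬(x = w ∨ x = z) := by
          rintro (rfl | rfl) <;> [exact hw hx; exact hz hx]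
        simp only [hT, hxw, if_false, hx, if_true]
        rw [Finset.card_compl]
        simp only [Finset.card_singleton, Fintype.card_fin]
        rw [Nat.cast_sub hD]
        field_simp; norm_num
      rw [Finset.prod_congr rfl gJ, Finset.prod_const, gw, gz]
      ring
    · -- outside: factor is 1
      have hxw : ¬(x = w ∨ x = z) := by
        rintro (rfl | rfl) <;> simp_all [Finset.mem_insert]
      have hxJ : x ∉ Jwz := fun h => hx (by simp [Finset.mem_insert, h])
      simp [hT, hxw, hxJ, hDne]
  have hcardfun : (Fintype.card (V → Fin D) : ℝ) = ∏ _x : V, (D : ℝ) := by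
    rw [Fintype.card_fun, Fintype.card_fin, Finset.prod_const, Finset.card_univ]
    push_cast; rfl
  push_cast
  rw [hcardfun, Finset.sum_div]
  have : ∀ c : Fin D, (∏ x : V, ((T c x).card : ℝ)) / (∏ _x : V, (D : ℝ)) =
      ((D : ℝ)⁻¹)^2 * (1 - 1/(D:ℝ)) ^ Jwz.card := by
    intro c
    rw [← Finset.prod_div_distrib]
    exact hprod c
  rw [Finset.sum_congr rfl fun c _ => this c, Finset.sum_const, Finset.card_univ,
    Fintype.card_fin, nsmul_eq_mul]
  field_simp


/-- For a vertex `v` whose neighborhood spans more than `ϑD²` non-edges, with each vertex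
independently uniformly colored from `D` colors: for nonadjacent `w, z ∈ N(v)` the event
`A^v_{wz}` (that `τ w = τ z` and no vertex of `J = (N(v) ∪ N(w) ∪ N(z)) \ {w,z}` gets this
color) has probability exactly `D⁻¹ (1 - 1/D)^{|J|}`, and consequently the expected number
of pairs `{w,z} ⊆ N(v)` for which `A^v_{wz}` holds exceeds `ϑ D e⁻³`,
provided `|J| ≤ 3D - 3` always. -/
theorem stmt2 {V : Type*} [Fintype V] [DecidableEq V]
    (G : SimpleGraph V) [DecidableRel G.Adj] (D : ℕ) (hD : 0 < D)
    (hdeg : ∀ u : V, G.degree u ≤ D) (ϑ : ℝ) (hϑ : 0 < ϑ) (v : V)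
    -- `J` for a nonadjacent pair `w, z ∈ N(v)`
    (J : V → V → Finset V)
    (hJdef : ∀ w z : V, J w z =
      (G.neighborFinset v ∪ G.neighborFinset w ∪ G.neighborFinset z) \ {w, z})
    -- the probability of an event, for a uniform random coloring `τ : V → Fin D`
    (Pr : ((V → Fin D) → Prop) → ℝ)
    (hPr : ∀ E : (V → Fin D) → Prop,
      Pr E = ((Finset.univ.filter E).card : ℝ) / (Fintype.card (V → Fin D)))
    -- the event `A^v_{wz}`
    (A : V → V → (V → Fin D) → Prop)
    (hA : ∀ w z : V, ∀ τ : V → Fin D,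
      A w z τ ↔ (τ w = τ z ∧ ∀ x ∈ J w z, τ x ≠ τ w))
    -- more than `ϑD²` non-edges inside `N(v)`
    (hsparse : ϑ * (D : ℝ) ^ 2 <
      (((G.neighborFinset v ×ˢ G.neighborFinset v).filter
        (fun p => p.1 ≠ p.2 ∧ ¬ G.Adj p.1 p.2)).card : ℝ) / 2)
    -- `|J| ≤ 3D - 3` for the relevant pairs
    (hJcard : ∀ w z : V, w ∈ G.neighborFinset v → z ∈ G.neighborFinset v →
      w ≠ z → ¬ G.Adj w z → (J w z).card ≤ 3 * D - 3) :
    (∀ w z : V, w ∈ G.neighborFinset v → z ∈ G.neighborFinset v →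
        w ≠ z → ¬ G.Adj w z →
        Pr (A w z) = (D : ℝ)⁻¹ * (1 - 1 / (D : ℝ)) ^ ((J w z).card)) ∧
    ϑ * (D : ℝ) * Real.exp (-3) <
      (∑ p ∈ (G.neighborFinset v ×ˢ G.neighborFinset v).filter
          (fun p => p.1 ≠ p.2 ∧ ¬ G.Adj p.1 p.2), Pr (A p.1 p.2)) / 2 := by
  have hDne : ((D : ℝ)) ≠ 0 := Nat.cast_ne_zero.mpr hD.ne'
  have part1 : ∀ w z : V, w ∈ G.neighborFinset v → z ∈ G.neighborFinset v →
      w ≠ z → ¬ G.Adj w z →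
      Pr (A w z) = (D : ℝ)⁻¹ * (1 - 1 / (D : ℝ)) ^ ((J w z).card) := by
    intro w z hwv hzv hwz hnadj
    rw [hPr]
    have hfilter : Finset.univ.filter (A w z) =
        Finset.univ.filter (fun τ : V → Fin D =>
          τ w = τ z ∧ ∀ x ∈ J w z, τ x ≠ τ w) :=
      Finset.filter_congr fun τ _ => hA w z τ
    rw [hfilter]
    exact count_prob' D hD w z hwz (J w z)
      (by simp [hJdef]) (by simp [hJdef])
  refine ⟨part1, ?_⟩
  set P := (G.neighborFinset v ×ˢ G.neighborFinset v).filter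
      (fun p => p.1 ≠ p.2 ∧ ¬ G.Adj p.1 p.2) with hP
  have hterm : ∀ p ∈ P, (D:ℝ)⁻¹ * Real.exp (-3) ≤ Pr (A p.1 p.2) := by
    intro p hp
    rw [hP, Finset.mem_filter, Finset.mem_product] at hp
    obtain ⟨⟨h1, h2⟩, h3, h4⟩ := hp
    rw [part1 p.1 p.2 h1 h2 h3 h4]
    exact mul_le_mul_of_nonneg_left
      (exp_bound' D hD _ (hJcard p.1 p.2 h1 h2 h3 h4)) (by positivity)
  have hsum : (P.card : ℝ) * ((D:ℝ)⁻¹ * Real.exp (-3)) ≤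
      ∑ p ∈ P, Pr (A p.1 p.2) := by
    calc (P.card : ℝ) * ((D:ℝ)⁻¹ * Real.exp (-3))
        = ∑ _p ∈ P, (D:ℝ)⁻¹ * Real.exp (-3) := by
          rw [Finset.sum_const, nsmul_eq_mul]
      _ ≤ ∑ p ∈ P, Pr (A p.1 p.2) := Finset.sum_le_sum hterm
  have hpos : 0 < (D:ℝ)⁻¹ * Real.exp (-3) := by positivity
  have hid : ϑ * (D:ℝ) * Real.exp (-3) =
      ϑ * (D:ℝ)^2 * ((D:ℝ)⁻¹ * Real.exp (-3)) := by
    field_simp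
  rw [hid]
  calc ϑ * (D:ℝ)^2 * ((D:ℝ)⁻¹ * Real.exp (-3))
      < ((P.card : ℝ) / 2) * ((D:ℝ)⁻¹ * Real.exp (-3)) :=
        mul_lt_mul_of_pos_right hsparse hpos
    _ = (P.card : ℝ) * ((D:ℝ)⁻¹ * Real.exp (-3)) / 2 := by ring
    _ ≤ (∑ p ∈ P, Pr (A p.1 p.2)) / 2 := by linarith
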